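/- arXiv:1908.09903 — 8 statements merged into one kernel-verified Lean document; each statement's English description precedes it below -/
import Mathlib

section
/- (Singleton bound) Let F be a field and C a linear code of length n over F (a submodule of Fin n → F) with dim C = k ≥ 1. If every nonzero codeword of C has Hamming weight at least d, then d ≤ n − k + 1. -/
/-- Singleton bound: a linear code of length `n` and dimension `k ≥ 1` in which every
nonzero codeword has Hamming weight at least `d` satisfies `d ≤ n - k + 1`. -/
theorem stmt_6 {n d k : ℕ} {F : Type*} [Field F] [DecidableEq F]
    (C : Submodule F (Fin n → F))
    (hk : Module.finrank F C = k) (hk1 : 1 ≤ k)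
    (hd : ∀ c ∈ C, c ≠ 0 → d ≤ hammingNorm c) :
    d ≤ n - k + 1 := by
  have hkn : k ≤ n := by
    have := Submodule.finrank_le C
    simpa [hk, Module.finrank_fintype_fun_eq_card] using this
  have hle : k - 1 ≤ n := le_trans (Nat.sub_le _ _) hkn
  -- projection to first k-1 coordinates, restricted to C
  let f : C →ₗ[F] (Fin (k - 1) → F) :=
    { toFun := fun c i => (c : Fin n → F) (Fin.castLE hle i)
      map_add' := by intro a b; rfl
      map_smul' := by intro a b; rfl }
  have hnotinj : ¬ Function.Injective f := by
    intro hinj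
    have h1 : Module.finrank F (LinearMap.range f) = k := by
      rw [LinearMap.finrank_range_of_inj hinj, hk]
    have h2 := Submodule.finrank_le (LinearMap.range f)
    rw [h1, Module.finrank_fintype_fun_eq_card] at h2
    simp at h2
    omega
  rw [← LinearMap.ker_eq_bot] at hnotinj
  obtain ⟨c, hcker, hc0⟩ := Submodule.exists_mem_ne_zero_of_ne_bot hnotinj
  have hcC : (c : Fin n → F) ∈ C := c.2
  have hcne : (c : Fin n → F) ≠ 0 := by
    intro h
    exact hc0 (Subtype.ext h)
  have hdle := hd _ hcC hcne
  -- c vanishes on first k-1 coordinates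
  have hzero : ∀ i : Fin n, (i : ℕ) < k - 1 → (c : Fin n → F) i = 0 := by
    intro i hi
    have : f c = 0 := (LinearMap.mem_ker).mp hcker
    have := congrFun this ⟨i, hi⟩
    simpa [f, Fin.castLE, Fin.ext_iff] using this
  -- so hammingNorm c ≤ n - (k-1)
  have hwt : hammingNorm (c : Fin n → F) ≤ n - (k - 1) := by
    have hsub : {i : Fin n | (c : Fin n → F) i ≠ 0}.toFinset ⊆
        Finset.univ.filter (fun i : Fin n => ¬ (i : ℕ) < k - 1) := by
      intro i hi
      simp only [Set.mem_toFinset, Set.mem_setOf_eq] at hi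
      simp only [Finset.mem_filter, Finset.mem_univ, true_and]
      intro hlt
      exact hi (hzero i hlt)
    have hcard := Finset.card_le_card hsub
    have hsplit := Finset.card_filter_add_card_filter_not
      (s := (Finset.univ : Finset (Fin n))) (p := fun i : Fin n => (i : ℕ) < k - 1)
    have hlow : k - 1 ≤ (Finset.univ.filter (fun i : Fin n => (i : ℕ) < k - 1)).card := by
      have hmap : (Finset.univ.map (Fin.castLEEmb hle)) ⊆
          Finset.univ.filter (fun i : Fin n => (i : ℕ) < k - 1) := by
        intro i hi
        simp only [Finset.mem_map, Finset.mem_univ, true_and] at hi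
        obtain ⟨j, hj⟩ := hi
        simp only [Finset.mem_filter, Finset.mem_univ, true_and]
        subst hj
        exact j.2
      have := Finset.card_le_card hmap
      simpa using this
    have hH : hammingNorm (c : Fin n → F) =
        {i : Fin n | (c : Fin n → F) i ≠ 0}.toFinset.card := by
      simp [hammingNorm, Set.toFinset_setOf]
    simp only [Finset.card_univ, Fintype.card_fin] at hsplit
    omega
  omega
end

section
/- (Binary MDS codes are trivial) Let C be a linear code of length n over GF(2) (a submodule of Fin n → ZMod 2) with dim C = k, where 2 ≤ k, and suppose C is MDS, i.e., every nonzero codeword of C has Hamming weight at least n − k + 1. Then k = n or k = n − 1. -/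
open Finset

/-- Binary MDS codes are trivial: a binary linear `[n,k]` code with `k ≥ 2` in which every
nonzero codeword has Hamming weight at least `n - k + 1` satisfies `k = n` or `k = n - 1`. -/
theorem stmt_10 {n k : ℕ}
    (C : Submodule (ZMod 2) (Fin n → ZMod 2))
    (hk : Module.finrank (ZMod 2) C = k) (hk2 : 2 ≤ k)
    (hmds : ∀ c ∈ C, c ≠ 0 → n - k + 1 ≤ hammingNorm c) :
    k = n ∨ k = n - 1 := by
  have hkn : k ≤ n := by
    have := Submodule.finrank_le C
    simpa [hk, Module.finrank_fintype_fun_eq_card] using this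
  by_contra hcon
  push_neg at hcon
  have h2 : k + 2 ≤ n := by omega
  have hkn' : k ≤ n := by omega
  let π : C →ₗ[ZMod 2] (Fin k → ZMod 2) :=
    { toFun := fun c j => c.1 (Fin.castLE hkn' j)
      map_add' := by intros; rfl
      map_smul' := by intros; rfl }
  have h01 : ∀ x : ZMod 2, x ≠ 1 → x = 0 := by decide
  have hIio : (univ.filter fun i : Fin n => (i : ℕ) < k).card = k := by
    have : (univ.filter fun i : Fin n => (i : ℕ) < k) = Finset.Iio ⟨k, by omega⟩ := by
      ext i; simp [Fin.lt_def]
    rw [this, Fin.card_Iio]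
  have htail : (univ.filter fun i : Fin n => k ≤ (i : ℕ)).card = n - k := by
    have := Finset.card_filter_add_card_filter_not (s := (univ : Finset (Fin n)))
      (p := fun i : Fin n => (i : ℕ) < k)
    simp only [not_lt, hIio, Finset.card_univ, Fintype.card_fin] at this
    omega
  have hinj : Function.Injective π := by
    rw [← LinearMap.ker_eq_bot, LinearMap.ker_eq_bot']
    intro c hc
    by_contra hc0
    have hcne : c.1 ≠ 0 := fun h => hc0 (Subtype.ext h)
    have hb := hmds c.1 c.2 hcne
    have hsub : (univ.filter fun i => c.1 i ≠ 0) ⊆ univ.filter fun i : Fin n => k ≤ (i : ℕ) := by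
      intro i hi
      simp only [mem_filter, mem_univ, true_and] at hi ⊢
      by_contra hlt
      push_neg at hlt
      have : c.1 (Fin.castLE hkn' ⟨i, hlt⟩) = 0 := congrFun hc ⟨i, hlt⟩
      exact hi (by simpa using this)
    have := Finset.card_le_card hsub
    rw [htail] at this
    simp only [hammingNorm] at hb
    omega
  have hsurj : Function.Surjective π :=
    (LinearMap.injective_iff_surjective_of_finrank_eq_finrank
      (by rw [hk, Module.finrank_fintype_fun_eq_card, Fintype.card_fin])).mp hinj
  have key : ∀ (c : C) (j : Fin k), (π c = Pi.single j 1) →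
      ∀ i : Fin n, k ≤ (i : ℕ) → c.1 i = 1 := by
    intro c j hcj i0 hi0
    by_contra hne
    have hz : c.1 i0 = 0 := h01 _ hne
    have hcne : c.1 ≠ 0 := by
      intro h
      have h1 : π c j = 0 := by
        show c.1 (Fin.castLE hkn' j) = 0
        rw [h]; rfl
      rw [hcj] at h1; simp at h1
    have hb := hmds c.1 c.2 hcne
    have hsub : (univ.filter fun i => c.1 i ≠ 0) ⊆
        insert (Fin.castLE hkn' j) ((univ.filter fun i : Fin n => k ≤ (i : ℕ)).erase i0) := by
      intro i hi
      simp only [mem_filter, mem_univ, true_and] at hi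
      rcases lt_or_ge (i : ℕ) k with hlt | hge
      · have hv : c.1 i = (Pi.single j 1 : Fin k → ZMod 2) ⟨(i : ℕ), hlt⟩ := by
          have := congrFun hcj ⟨(i : ℕ), hlt⟩
          simpa [π] using this
        have hjj : (⟨(i : ℕ), hlt⟩ : Fin k) = j := by
          by_contra hjj
          rw [Pi.single_eq_of_ne hjj] at hv
          exact hi hv
        have : i = Fin.castLE hkn' j := by
          apply Fin.ext
          simpa using congrArg Fin.val hjj
        rw [this]
        exact Finset.mem_insert_self _ _
      · apply Finset.mem_insert_of_mem
        refine Finset.mem_erase.mpr ⟨?_, ?_⟩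
        · intro h; rw [h] at hi; exact hi hz
        · simp [hge]
    have hcard := Finset.card_le_card hsub
    have hins := Finset.card_insert_le (Fin.castLE hkn' j)
      ((univ.filter fun i : Fin n => k ≤ (i : ℕ)).erase i0)
    have hera : ((univ.filter fun i : Fin n => k ≤ (i : ℕ)).erase i0).card = n - k - 1 := by
      rw [Finset.card_erase_of_mem (by simp [hi0]), htail]
    simp only [hammingNorm] at hb
    omega
  set j0 : Fin k := ⟨0, by omega⟩ with hj0
  set j1 : Fin k := ⟨1, by omega⟩ with hj1
  have hk0 : j0 ≠ j1 := by simp [hj0, hj1, Fin.ext_iff]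
  obtain ⟨c1, hc1⟩ := hsurj (Pi.single j0 1)
  obtain ⟨c2, hc2⟩ := hsurj (Pi.single j1 1)
  have t1 := key c1 j0 hc1
  have t2 := key c2 j1 hc2
  set c := c1.1 + c2.1 with hcdef
  have hcC : c ∈ C := C.add_mem c1.2 c2.2
  have hchead : c (Fin.castLE hkn' j0) = 1 := by
    have e1 : c1.1 (Fin.castLE hkn' j0) = 1 := by
      have := congrFun hc1 j0; simpa [π] using this
    have e2 : c2.1 (Fin.castLE hkn' j0) = 0 := by
      have := congrFun hc2 j0
      simpa [π, Pi.single_eq_of_ne hk0] using this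
    simp [hcdef, e1, e2]
  have hcne : c ≠ 0 := by
    intro h
    rw [h] at hchead
    simp at hchead
  have hb := hmds c hcC hcne
  have hsub : (univ.filter fun i => c i ≠ 0) ⊆
      {Fin.castLE hkn' j0, Fin.castLE hkn' j1} := by
    intro i hi
    simp only [mem_filter, mem_univ, true_and] at hi
    rcases lt_or_ge (i : ℕ) k with hlt | hge
    · have e1 : c1.1 i = (Pi.single j0 1 : Fin k → ZMod 2) ⟨(i : ℕ), hlt⟩ := by
        have := congrFun hc1 ⟨(i : ℕ), hlt⟩; simpa [π] using this
      have e2 : c2.1 i = (Pi.single j1 1 : Fin k → ZMod 2) ⟨(i : ℕ), hlt⟩ := by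
        have := congrFun hc2 ⟨(i : ℕ), hlt⟩; simpa [π] using this
      by_cases h0 : (⟨(i : ℕ), hlt⟩ : Fin k) = j0
      · have : i = Fin.castLE hkn' j0 := by
          apply Fin.ext
          simpa using congrArg Fin.val h0
        simp [this]
      · by_cases h1 : (⟨(i : ℕ), hlt⟩ : Fin k) = j1
        · have : i = Fin.castLE hkn' j1 := by
            apply Fin.ext
            simpa using congrArg Fin.val h1
          simp [this]
        · exfalso
          apply hi
          rw [hcdef]
          simp only [Pi.add_apply, e1, e2, Pi.single_eq_of_ne h0, Pi.single_eq_of_ne h1, add_zero]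
    · exfalso
      apply hi
      simp only [hcdef, Pi.add_apply, t1 i hge, t2 i hge]
      decide
  have hcard := Finset.card_le_card hsub
  have hle2 : ({Fin.castLE hkn' j0, Fin.castLE hkn' j1} : Finset (Fin n)).card ≤ 2 :=
    Finset.card_le_two
  simp only [hammingNorm] at hb
  omega
end

section
/- (The extended Golay code is self-dual) Let p = (1,0,1,0,0,0,1,1,1,0,1) ∈ (ZMod 2)^11, and let Q be the 12 × 12 matrix over GF(2) whose row i, for 0 ≤ i ≤ 10, is (ρ^i(p), 1), where ρ^i(p) is the cyclic rotation of p to the right by i positions, and whose row 11 is (1,1,1,1,1,1,1,1,1,1,1,0). Let H₁ = (Q | I₁₂) be the 12 × 24 matrix obtained by adjoining the 12 × 12 identity. Let G₂₄ = {x : Fin 24 → ZMod 2 | H₁ · x = 0}. Then G₂₄ equals its dual code: G₂₄ = {y : Fin 24 → ZMod 2 | ∀ x ∈ G₂₄, Σᵢ xᵢ·yᵢ = 0}. -/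
/-- The vector `p = (1,0,1,0,0,0,1,1,1,0,1)`. -/
def golayP : Fin 11 → ZMod 2 := ![1, 0, 1, 0, 0, 0, 1, 1, 1, 0, 1]

/-- Cyclic rotation to the right: `ρ(v) = (v₁₀, v₀, v₁, …, v₉)`. -/
def rotR (v : Fin 11 → ZMod 2) : Fin 11 → ZMod 2 := fun j => v (j - 1)

/-- The 12 × 12 matrix `Q`: for `0 ≤ i ≤ 10`, row `i` is `(ρ^i(p), 1)`, and
row 11 is `(1,1,1,1,1,1,1,1,1,1,1,0)`. -/
def golayQ : Matrix (Fin 12) (Fin 12) (ZMod 2) := fun i j =>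
  if _hi : (i : ℕ) < 11 then
    if hj : (j : ℕ) < 11 then (rotR^[(i : ℕ)] golayP) ⟨(j : ℕ), hj⟩ else 1
  else
    if (j : ℕ) < 11 then 1 else 0

/-- The 12 × 24 matrix `H₁ = (Q | I₁₂)`. -/
def golayH : Matrix (Fin 12) (Fin 24) (ZMod 2) := fun i j =>
  if hj : (j : ℕ) < 12 then golayQ i ⟨(j : ℕ), hj⟩
  else if (j : ℕ) - 12 = (i : ℕ) then 1 else 0

set_option maxRecDepth 100000 in
lemma golayQ_tmul : golayQ.transpose * golayQ = 1 := by decide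

set_option maxRecDepth 100000 in
lemma golayQ_mult : golayQ * golayQ.transpose = 1 := by decide

set_option maxRecDepth 100000 in
lemma golayH_lo : ∀ (r : Fin 12) (j : Fin 12),
    golayH r (Fin.castAdd 12 j) = golayQ r j := by
  have h : ∀ (r j : Fin 12), decide (golayH r (Fin.castAdd 12 j) = golayQ r j) = true := by decide
  exact fun r j => of_decide_eq_true (h r j)

set_option maxRecDepth 100000 in
lemma golayH_hi : ∀ (r j : Fin 12),
    golayH r (Fin.natAdd 12 j) = if j = r then 1 else 0 := by decide

lemma sum24 (f : Fin 24 → ZMod 2) :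
    ∑ i : Fin 24, f i =
      ∑ i : Fin 12, f (Fin.castAdd 12 i) + ∑ i : Fin 12, f (Fin.natAdd 12 i) :=
  Fin.sum_univ_add (f := fun i : Fin (12 + 12) => f i)

/-- For a codeword, the last 12 coordinates are determined by the first 12. -/
lemma code_hi {x : Fin 24 → ZMod 2} (hx : golayH.mulVec x = 0) (r : Fin 12) :
    x (Fin.natAdd 12 r) = golayQ.mulVec (fun j => x (Fin.castAdd 12 j)) r := by
  have h0 := congrFun hx r
  simp only [Matrix.mulVec, dotProduct, Pi.zero_apply] at h0
  rw [sum24 (fun j => golayH r j * x j)] at h0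
  simp only [golayH_lo, golayH_hi, ite_mul, one_mul, zero_mul,
    Finset.sum_ite_eq' Finset.univ, Finset.mem_univ, if_true] at h0
  have : x (Fin.natAdd 12 r) + x (Fin.natAdd 12 r) = 0 :=
    CharTwo.add_self_eq_zero _
  rw [Matrix.mulVec, dotProduct]
  exact ((neg_eq_of_add_eq_zero_right h0).symm).trans (CharTwo.neg_eq _)

/-- The generators of the code. -/
def golayGen (i : Fin 12) : Fin 24 → ZMod 2 := fun j =>
  if hj : (j : ℕ) < 12 then (if (j : ℕ) = (i : ℕ) then 1 else 0)
  else golayQ ⟨(j : ℕ) - 12, by omega⟩ i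

set_option maxRecDepth 1000000 in
lemma golayGen_mem : ∀ i : Fin 12, golayH.mulVec (golayGen i) = 0 := by decide

set_option maxRecDepth 100000 in
lemma golayGen_lo : ∀ (i j : Fin 12),
    golayGen i (Fin.castAdd 12 j) = if j = i then 1 else 0 := by decide

set_option maxRecDepth 100000 in
lemma golayGen_hi : ∀ (i j : Fin 12),
    golayGen i (Fin.natAdd 12 j) = golayQ j i := by decide

/-- The extended Golay code `G₂₄ = {x | H₁ · x = 0}` is self-dual: it equals its dual code. -/
theorem stmt_11 :
    {x : Fin 24 → ZMod 2 | golayH.mulVec x = 0} =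
      {y : Fin 24 → ZMod 2 |
        ∀ x : Fin 24 → ZMod 2, golayH.mulVec x = 0 → ∑ i : Fin 24, x i * y i = 0} := by
  ext y
  simp only [Set.mem_setOf_eq]
  constructor
  · -- the code is contained in its dual
    intro hy x hx
    set a : Fin 12 → ZMod 2 := fun j => x (Fin.castAdd 12 j) with ha
    set b : Fin 12 → ZMod 2 := fun j => y (Fin.castAdd 12 j) with hb
    rw [sum24 (fun i => x i * y i)]
    have h1 : ∀ r : Fin 12, x (Fin.natAdd 12 r) = golayQ.mulVec a r := code_hi hx
    have h2 : ∀ r : Fin 12, y (Fin.natAdd 12 r) = golayQ.mulVec b r := code_hi hy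
    have key : ∑ i : Fin 12, x (Fin.natAdd 12 i) * y (Fin.natAdd 12 i)
        = ∑ i : Fin 12, a i * b i := by
      have : ∑ i : Fin 12, golayQ.mulVec a i * golayQ.mulVec b i
          = dotProduct (golayQ.mulVec a) (golayQ.mulVec b) := rfl
      simp only [h1, h2, this, Matrix.dotProduct_mulVec, ← Matrix.mulVec_transpose,
        Matrix.mulVec_mulVec, golayQ_tmul, Matrix.one_mulVec]
      rfl
    rw [key]
    rw [← Finset.sum_add_distrib]
    apply Finset.sum_eq_zero
    intro i _
    exact CharTwo.add_self_eq_zero _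
  · -- the dual is contained in the code
    intro hy
    set b : Fin 12 → ZMod 2 := fun j => y (Fin.natAdd 12 j) with hb
    have hgen : ∀ i : Fin 12, y (Fin.castAdd 12 i) = golayQ.transpose.mulVec b i := by
      intro i
      have h0 := hy (golayGen i) (golayGen_mem i)
      rw [sum24 (fun j => golayGen i j * y j)] at h0
      simp only [golayGen_lo, golayGen_hi, ite_mul, one_mul, zero_mul,
        Finset.sum_ite_eq' Finset.univ, Finset.mem_univ, if_true] at h0
      have hself : y (Fin.castAdd 12 i) + y (Fin.castAdd 12 i) = 0 :=
        CharTwo.add_self_eq_zero _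
      rw [Matrix.mulVec, dotProduct]
      simp only [Matrix.transpose_apply]
      exact ((neg_eq_of_add_eq_zero_left h0).symm).trans (CharTwo.neg_eq _)
    funext r
    show golayH.mulVec y r = 0
    rw [Matrix.mulVec, dotProduct,
      sum24 (fun j => golayH r j * y j)]
    simp only [golayH_lo, golayH_hi, ite_mul, one_mul, zero_mul,
      Finset.sum_ite_eq' Finset.univ, Finset.mem_univ, if_true]
    have hsum : ∑ j : Fin 12, golayQ r j * y (Fin.castAdd 12 j)
        = golayQ.mulVec (fun j => y (Fin.castAdd 12 j)) r := rfl
    rw [hsum, show (fun j => y (Fin.castAdd 12 j)) = golayQ.transpose.mulVec b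
        from funext hgen,
      Matrix.mulVec_mulVec, golayQ_mult, Matrix.one_mulVec]
    exact CharTwo.add_self_eq_zero _
end

section
/- (Minimum distance of the extended Golay code) Let p = (1,0,1,0,0,0,1,1,1,0,1) ∈ (ZMod 2)^11, let Q be the 12 × 12 matrix over GF(2) whose row i, for 0 ≤ i ≤ 10, is (ρ^i(p), 1), where ρ^i(p) is the cyclic rotation of p to the right by i positions, and whose row 11 is (1,1,1,1,1,1,1,1,1,1,1,0), and let H₁ = (Q | I₁₂). Let G₂₄ = {x : Fin 24 → ZMod 2 | H₁ · x = 0}. Then every nonzero codeword of G₂₄ has Hamming weight at least 8, and there exists a codeword of G₂₄ of Hamming weight exactly 8; i.e., the minimum distance of G₂₄ is 8. -/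
/- ### Nat-level computation -/

def tb (n i : ℕ) : ℕ := n / 2^i % 2

def natWt (n : ℕ) : ℕ :=
  tb n 0 + tb n 1 + tb n 2 + tb n 3 + tb n 4 + tb n 5 +
  tb n 6 + tb n 7 + tb n 8 + tb n 9 + tb n 10 + tb n 11

def qn (n : ℕ) : ℕ :=
  (tb n 0 + tb n 2 + tb n 6 + tb n 7 + tb n 8 + tb n 10 + tb n 11) % 2 +
  (tb n 0 + tb n 1 + tb n 3 + tb n 7 + tb n 8 + tb n 9 + tb n 11) % 2 +
  (tb n 1 + tb n 2 + tb n 4 + tb n 8 + tb n 9 + tb n 10 + tb n 11) % 2 +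
  (tb n 0 + tb n 2 + tb n 3 + tb n 5 + tb n 9 + tb n 10 + tb n 11) % 2 +
  (tb n 0 + tb n 1 + tb n 3 + tb n 4 + tb n 6 + tb n 10 + tb n 11) % 2 +
  (tb n 0 + tb n 1 + tb n 2 + tb n 4 + tb n 5 + tb n 7 + tb n 11) % 2 +
  (tb n 1 + tb n 2 + tb n 3 + tb n 5 + tb n 6 + tb n 8 + tb n 11) % 2 +
  (tb n 2 + tb n 3 + tb n 4 + tb n 6 + tb n 7 + tb n 9 + tb n 11) % 2 +
  (tb n 3 + tb n 4 + tb n 5 + tb n 7 + tb n 8 + tb n 10 + tb n 11) % 2 +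
  (tb n 0 + tb n 4 + tb n 5 + tb n 6 + tb n 8 + tb n 9 + tb n 11) % 2 +
  (tb n 1 + tb n 5 + tb n 6 + tb n 7 + tb n 9 + tb n 10 + tb n 11) % 2 +
  (tb n 0 + tb n 1 + tb n 2 + tb n 3 + tb n 4 + tb n 5 + tb n 6 + tb n 7 + tb n 8 + tb n 9 + tb n 10) % 2

set_option maxRecDepth 100000 in
set_option maxHeartbeats 4000000 in
theorem natMain : ∀ a : Fin 64, ∀ b : Fin 64, a.val * 64 + b.val ≠ 0 →
    8 ≤ natWt (a.val * 64 + b.val) + qn (a.val * 64 + b.val) := by decide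

def bits (n : ℕ) : Fin 12 → ZMod 2 := fun i => if n.testBit i then 1 else 0

def QE : Matrix (Fin 12) (Fin 12) (ZMod 2) :=
!![1,0,1,0,0,0,1,1,1,0,1,1;
   1,1,0,1,0,0,0,1,1,1,0,1;
   0,1,1,0,1,0,0,0,1,1,1,1;
   1,0,1,1,0,1,0,0,0,1,1,1;
   1,1,0,1,1,0,1,0,0,0,1,1;
   1,1,1,0,1,1,0,1,0,0,0,1;
   0,1,1,1,0,1,1,0,1,0,0,1;
   0,0,1,1,1,0,1,1,0,1,0,1;
   0,0,0,1,1,1,0,1,1,0,1,1;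
   1,0,0,0,1,1,1,0,1,1,0,1;
   0,1,0,0,0,1,1,1,0,1,1,1;
   1,1,1,1,1,1,1,1,1,1,1,0]

theorem golayQ_eq : golayQ = QE := by decide

theorem bits_cast (n : ℕ) (i : ℕ) :
    (if n.testBit i then (1:ZMod 2) else 0) = ((n / 2^i % 2 : ℕ) : ZMod 2) := by
  rw [Nat.testBit_eq_decide_div_mod_eq]
  have : n / 2^i % 2 = 0 ∨ n / 2^i % 2 = 1 := by omega
  rcases this with h | h <;> simp [h]

theorem zmod_ind (s : ℕ) : (if (s : ZMod 2) ≠ 0 then (1:ℕ) else 0) = s % 2 := by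
  have h2 : ((s : ZMod 2) = 0) ↔ (2 ∣ s) := ZMod.natCast_eq_zero_iff s 2
  by_cases h : (s : ZMod 2) = 0
  · rw [if_neg (not_not_intro h)]; have := h2.mp h; omega
  · rw [if_pos h]; have : ¬ (2 ∣ s) := fun d => h (h2.mpr d); omega

theorem hval : ∀ a : ZMod 2, ((a.val : ℕ) : ZMod 2) = a := by decide

set_option maxRecDepth 10000 in
theorem hn_bits (n : ℕ) : hammingNorm (bits n) = natWt n := by
  have h : ∀ m : ℕ, (if m % 2 = 1 then (1:ℕ) else 0) = m % 2 := fun m => by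
    rcases Nat.mod_two_eq_zero_or_one m with h | h <;> simp [h]
  simp [hammingNorm, Finset.card_filter, Fin.sum_univ_succ, bits,
    Nat.testBit_eq_decide_div_mod_eq, h, natWt, tb]
  omega

set_option maxRecDepth 10000 in
set_option maxHeartbeats 2000000 in
theorem hn_mul_bits (n : ℕ) : hammingNorm (golayQ.mulVec (bits n)) = qn n := by
  have hrow : ∀ i, golayQ.mulVec (bits n) i
      = ((∑ j : Fin 12, (golayQ i j).val * tb n (j : ℕ) : ℕ) : ZMod 2) := by
    intro i
    calc golayQ.mulVec (bits n) i = ∑ j : Fin 12, golayQ i j * bits n j := rfl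
      _ = ∑ j : Fin 12, (((golayQ i j).val * tb n (j : ℕ) : ℕ) : ZMod 2) :=
          Finset.sum_congr rfl (fun j _ => by
            rw [Nat.cast_mul, hval]
            show golayQ i j * bits n j = _
            rw [show bits n j = ((n / 2^(j:ℕ) % 2 : ℕ) : ZMod 2) from bits_cast n (j:ℕ)]
            rfl)
      _ = _ := (Nat.cast_sum _ _).symm
  have step1 : hammingNorm (golayQ.mulVec (bits n))
      = ∑ i : Fin 12, (∑ j : Fin 12, (golayQ i j).val * tb n (j : ℕ)) % 2 := by
    simp only [hammingNorm, Finset.card_filter]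
    refine Finset.sum_congr rfl fun i _ => ?_
    rw [hrow i, zmod_ind]
  rw [step1, golayQ_eq]
  have v1 : (1 : ZMod 2).val = 1 := rfl
  have v0 : (0 : ZMod 2).val = 0 := rfl
  simp only [Fin.sum_univ_succ, Fin.sum_univ_zero, Fin.val_succ, Fin.val_zero, QE,
    Matrix.cons_val', Matrix.cons_val_zero, Matrix.cons_val_succ, Matrix.of_apply,
    Matrix.head_cons, Matrix.empty_val', Matrix.cons_val_fin_one, Matrix.head_fin_const,
    v1, v0, one_mul, zero_mul, add_zero, zero_add, Nat.add_zero, qn, tb]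
  simp only [Nat.reducePow]
  generalize n % 2 = b0
  generalize n / 2 % 2 = b1
  generalize n / 4 % 2 = b2
  generalize n / 8 % 2 = b3
  generalize n / 16 % 2 = b4
  generalize n / 32 % 2 = b5
  generalize n / 64 % 2 = b6
  generalize n / 128 % 2 = b7
  generalize n / 256 % 2 = b8
  generalize n / 512 % 2 = b9
  generalize n / 1024 % 2 = b10
  generalize n / 2048 % 2 = b11
  omega

theorem bits_zero : bits 0 = 0 := by
  funext i; simp [bits]

theorem bridge (u : Fin 12 → ZMod 2) (hu : u ≠ 0) :
    8 ≤ hammingNorm u + hammingNorm (golayQ.mulVec u) := by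
  have hv0 := ZMod.val_lt (u 0); have hv1 := ZMod.val_lt (u 1)
  have hv2 := ZMod.val_lt (u 2); have hv3 := ZMod.val_lt (u 3)
  have hv4 := ZMod.val_lt (u 4); have hv5 := ZMod.val_lt (u 5)
  have hv6 := ZMod.val_lt (u 6); have hv7 := ZMod.val_lt (u 7)
  have hv8 := ZMod.val_lt (u 8); have hv9 := ZMod.val_lt (u 9)
  have hv10 := ZMod.val_lt (u 10); have hv11 := ZMod.val_lt (u 11)
  set n : ℕ := (u 0).val + 2*(u 1).val + 4*(u 2).val + 8*(u 3).val + 16*(u 4).val +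
    32*(u 5).val + 64*(u 6).val + 128*(u 7).val + 256*(u 8).val + 512*(u 9).val +
    1024*(u 10).val + 2048*(u 11).val with hn
  have hbit : ∀ (k : Fin 12) (c : ℕ), n / c % 2 = (u k).val → 2^(k:ℕ) = c → bits n k = u k := by
    intro k c h1 h2
    have h3 := bits_cast n (k:ℕ)
    rw [h2, h1, hval] at h3
    simpa [bits] using h3
  have hbits : bits n = u := by
    funext k
    fin_cases k
    · exact hbit 0 1 (by omega) (by decide)
    · exact hbit 1 2 (by omega) (by decide)
    · exact hbit 2 4 (by omega) (by decide)
    · exact hbit 3 8 (by omega) (by decide)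
    · exact hbit 4 16 (by omega) (by decide)
    · exact hbit 5 32 (by omega) (by decide)
    · exact hbit 6 64 (by omega) (by decide)
    · exact hbit 7 128 (by omega) (by decide)
    · exact hbit 8 256 (by omega) (by decide)
    · exact hbit 9 512 (by omega) (by decide)
    · exact hbit 10 1024 (by omega) (by decide)
    · exact hbit 11 2048 (by omega) (by decide)
  have hnz : n ≠ 0 := by
    intro h0
    apply hu
    rw [← hbits, h0, bits_zero]
  have hlt : n < 4096 := by omega
  have hmain := natMain ⟨n / 64, by omega⟩ ⟨n % 64, by omega⟩
  simp only at hmain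
  have heq : n / 64 * 64 + n % 64 = n := by omega
  rw [heq] at hmain
  have := hmain hnz
  rw [← hbits, hn_bits, hn_mul_bits]
  exact this

/- ### splitting a length-24 vector -/

theorem sum_split {M : Type*} [AddCommMonoid M] (f : Fin 24 → M) :
    ∑ j : Fin 24, f j = ∑ j : Fin 12, f (Fin.castAdd 12 j) + ∑ j : Fin 12, f (Fin.natAdd 12 j) :=
  Fin.sum_univ_add (fun j : Fin (12+12) => f j)

set_option maxHeartbeats 1000000 in
theorem mulVec_split (x : Fin 24 → ZMod 2) (i : Fin 12) :
    golayH.mulVec x i =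
      golayQ.mulVec (fun j : Fin 12 => x (Fin.castAdd 12 j)) i + x (Fin.natAdd 12 i) := by
  show ∑ j : Fin 24, golayH i j * x j = _
  rw [sum_split (fun j => golayH i j * x j)]
  have hA : ∑ j : Fin 12, golayH i (Fin.castAdd 12 j) * x (Fin.castAdd 12 j)
      = golayQ.mulVec (fun j : Fin 12 => x (Fin.castAdd 12 j)) i := by
    show _ = ∑ j : Fin 12, golayQ i j * x (Fin.castAdd 12 j)
    refine Finset.sum_congr rfl fun j _ => ?_
    congr 1
    show golayH i ⟨(j : ℕ), by omega⟩ = golayQ i j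
    simp only [golayH]
    rw [dif_pos (show ((j : ℕ)) < 12 from j.isLt)]
  have hB : ∑ j : Fin 12, golayH i (Fin.natAdd 12 j) * x (Fin.natAdd 12 j)
      = x (Fin.natAdd 12 i) := by
    have h1 : ∀ j : Fin 12, golayH i (Fin.natAdd 12 j) * x (Fin.natAdd 12 j)
        = if j = i then x (Fin.natAdd 12 j) else 0 := by
      intro j
      have h2 : golayH i (Fin.natAdd 12 j) = if j = i then 1 else 0 := by
        simp only [golayH, Fin.natAdd]
        rw [dif_neg (by simp)]
        simp only [Nat.add_sub_cancel_left 12 (j : ℕ)]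
        by_cases h : j = i
        · rw [if_pos (by rw [h]), if_pos h]
        · rw [if_neg (by intro he; exact h (Fin.ext he)), if_neg h]
      rw [h2]
      by_cases h : j = i <;> simp [h]
    rw [Finset.sum_congr rfl (fun j _ => h1 j)]
    rw [Finset.sum_ite_eq' Finset.univ i (fun j => x (Fin.natAdd 12 j))]
    simp
  rw [hA, hB]

set_option maxHeartbeats 1000000 in
theorem wt_split (x : Fin 24 → ZMod 2) :
    hammingNorm x = hammingNorm (fun j : Fin 12 => x (Fin.castAdd 12 j)) +
      hammingNorm (fun j : Fin 12 => x (Fin.natAdd 12 j)) := by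
  simp only [hammingNorm, Finset.card_filter]
  exact sum_split (fun j => if x j ≠ 0 then 1 else 0)

/-- The minimum distance of the extended Golay code `G₂₄ = {x | H₁ · x = 0}` is 8. -/
theorem stmt_12 :
    (∀ x : Fin 24 → ZMod 2, golayH.mulVec x = 0 → x ≠ 0 → 8 ≤ hammingNorm x) ∧
      ∃ x : Fin 24 → ZMod 2, golayH.mulVec x = 0 ∧ hammingNorm x = 8 := by
  constructor
  · intro x hx hne
    set u : Fin 12 → ZMod 2 := fun j => x (Fin.castAdd 12 j) with hu
    have hflip : ∀ a b : ZMod 2, a + b = 0 → b = a := by decide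
    have hsec : ∀ i : Fin 12, x (Fin.natAdd 12 i) = golayQ.mulVec u i := by
      intro i
      have h0 : golayH.mulVec x i = 0 := congrFun hx i
      rw [mulVec_split] at h0
      exact hflip _ _ h0
    have hune : u ≠ 0 := by
      intro h0
      apply hne
      funext j
      rcases lt_or_ge (j : ℕ) 12 with h | h
      · have hj : Fin.castAdd 12 (⟨(j : ℕ), h⟩ : Fin 12) = j := by
          apply Fin.ext; rfl
        have := congrFun h0 ⟨(j : ℕ), h⟩
        rw [hu] at this
        simpa [hj] using this
      · have hj : Fin.natAdd 12 (⟨(j : ℕ) - 12, by omega⟩ : Fin 12) = j := by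
          apply Fin.ext; simp; omega
        rw [← hj, hsec, h0, Matrix.mulVec_zero]
        rfl
    have hb := bridge u hune
    rw [wt_split x]
    have h2 : (fun j : Fin 12 => x (Fin.natAdd 12 j)) = golayQ.mulVec u := funext hsec
    rw [h2]
    exact hb
  · refine ⟨![1,0,0,0,0,0,0,0,0,0,0,0,1,1,0,1,1,1,0,0,0,1,0,1], ?_, ?_⟩
    · decide
    · decide
end

section
/- (Key equation for decoding Reed–Solomon codes) Let F be a field, n and k natural numbers with k ≤ n, α an invertible element of F, E a finite subset of Fin n (the set of error locations), and e : Fin n → F (the error values). Define the error locator polynomial σ(x) = Π_{i∈E}(x − α^{−i}), the error evaluator polynomial ω(x) = Σ_{i∈E} e_i · Π_{l∈E, l≠i}(x − α^{−l}), the syndromes S_j = Σ_{i∈E} e_i·α^{i·j} for 1 ≤ j ≤ n−k, and the syndrome polynomial S(x) = Σ_{j=0}^{n−k−1} S_{j+1}·x^j. Then there exists a polynomial μ(x) ∈ F[x] such that σ(x)·S(x) = −ω(x) + μ(x)·x^{n−k}; equivalently, x^{n−k} divides σ(x)·S(x) + ω(x). -/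
open Polynomial

lemma tele_aux {F : Type*} [Field F] (a : F) (ha : a ≠ 0) (m : ℕ) :
    (X - C a⁻¹) * ∑ j ∈ Finset.range m, C (a ^ (j + 1)) * X ^ j
      = C (a ^ m) * X ^ m - 1 := by
  rw [Finset.mul_sum]
  have h : ∀ j, (X - C a⁻¹) * (C (a ^ (j + 1)) * X ^ j)
      = C (a ^ (j + 1)) * X ^ (j + 1) - C (a ^ j) * X ^ j := by
    intro j
    have h1 : a ^ (j + 1) * a⁻¹ = a ^ j := by
      field_simp
      ring
    have h2 : C (a ^ (j + 1)) * C a⁻¹ = (C (a ^ j) : Polynomial F) := by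
      rw [← C_mul, h1]
    linear_combination (-(X:Polynomial F) ^ j) * h2
  simp only [h]
  rw [Finset.sum_range_sub (fun j => C (a ^ j) * X ^ j)]
  simp

/-- The key equation for decoding Reed–Solomon codes: the error locator polynomial `σ`,
the error evaluator polynomial `ω` and the syndrome polynomial `S` satisfy
`σ(x)·S(x) = -ω(x) + μ(x)·x^(n-k)` for some polynomial `μ`. -/
theorem stmt_15 {F : Type*} [Field F] (n k : ℕ) (hkn : k ≤ n)
    (α : F) (hα : IsUnit α) (E : Finset (Fin n)) (e : Fin n → F)
    (σ ω S : Polynomial F)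
    (hσ : σ = ∏ i ∈ E, (X - C ((α ^ (i : ℕ))⁻¹)))
    (hω : ω = ∑ i ∈ E, C (e i) * ∏ l ∈ E.erase i, (X - C ((α ^ (l : ℕ))⁻¹)))
    (hS : S = ∑ j ∈ Finset.range (n - k),
      C (∑ i ∈ E, e i * α ^ ((i : ℕ) * (j + 1))) * X ^ j) :
    ∃ μ : Polynomial F, σ * S = -ω + μ * X ^ (n - k) := by
  set m := n - k with hm
  refine ⟨∑ i ∈ E, C (e i * α ^ ((i : ℕ) * m)) *
      ∏ l ∈ E.erase i, (X - C ((α ^ (l : ℕ))⁻¹)), ?_⟩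
  have hS' : S = ∑ i ∈ E, C (e i) *
      ∑ j ∈ Finset.range m, C ((α ^ (i : ℕ)) ^ (j + 1)) * X ^ j := by
    rw [hS]
    simp only [map_sum, Finset.sum_mul]
    rw [Finset.sum_comm]
    refine Finset.sum_congr rfl fun i _ => ?_
    rw [Finset.mul_sum]
    refine Finset.sum_congr rfl fun j _ => ?_
    rw [← pow_mul, C_mul]
    ring
  rw [hS', Finset.mul_sum]
  have key : ∀ i ∈ E, σ * (C (e i) *
      ∑ j ∈ Finset.range m, C ((α ^ (i : ℕ)) ^ (j + 1)) * X ^ j)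
      = C (e i * α ^ ((i : ℕ) * m)) *
          (∏ l ∈ E.erase i, (X - C ((α ^ (l : ℕ))⁻¹))) * X ^ m
        - C (e i) * ∏ l ∈ E.erase i, (X - C ((α ^ (l : ℕ))⁻¹)) := by
    intro i hi
    have ha : (α ^ (i : ℕ)) ≠ 0 := (hα.pow _).ne_zero
    rw [hσ, ← Finset.mul_prod_erase _ _ hi]
    have := tele_aux (α ^ (i : ℕ)) ha m
    calc (X - C ((α ^ (i : ℕ))⁻¹)) * (∏ l ∈ E.erase i, (X - C ((α ^ (l : ℕ))⁻¹))) *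
          (C (e i) * ∑ j ∈ Finset.range m, C ((α ^ (i : ℕ)) ^ (j + 1)) * X ^ j)
        = C (e i) * (∏ l ∈ E.erase i, (X - C ((α ^ (l : ℕ))⁻¹))) *
          ((X - C ((α ^ (i : ℕ))⁻¹)) *
            ∑ j ∈ Finset.range m, C ((α ^ (i : ℕ)) ^ (j + 1)) * X ^ j) := by ring
      _ = C (e i) * (∏ l ∈ E.erase i, (X - C ((α ^ (l : ℕ))⁻¹))) *
            (C ((α ^ (i : ℕ)) ^ m) * X ^ m - 1) := by rw [this]
      _ = _ := by
            rw [← pow_mul, C_mul]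
            ring
  rw [Finset.sum_congr rfl key, Finset.sum_sub_distrib, hω, Finset.sum_mul]
  ring
end

section
/- Let F be a field, n ≥ 1, α an invertible element of F whose multiplicative order is at least n, E a finite subset of Fin n, and e : Fin n → F with e_i ≠ 0 for all i ∈ E. Define σ(x) = Π_{i∈E}(x − α^{−i}) and ω(x) = Σ_{i∈E} e_i · Π_{l∈E, l≠i}(x − α^{−l}). Then: (1) σ(x) and ω(x) are coprime in F[x]; and (2) for every j ∈ E, the formal derivative σ′ satisfies σ′(α^{−j}) ≠ 0 and e_j = ω(α^{−j}) / σ′(α^{−j}), i.e., e_j · σ′(α^{−j}) = ω(α^{−j}). -/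
open Polynomial

/-- For an error pattern with nonzero error values at locations `E ⊆ Fin n`, where the
invertible element `α` has multiplicative order at least `n`: the error locator `σ` and
error evaluator `ω` are coprime, and the error values are recovered by
`e_j = ω(α^{-j}) / σ'(α^{-j})`. -/
theorem stmt_16 {F : Type*} [Field F] {n : ℕ} (hn : 1 ≤ n)
    (α : F) (hα : IsUnit α) (hord : ∀ m : ℕ, 0 < m → m < n → α ^ m ≠ 1)
    (E : Finset (Fin n)) (e : Fin n → F) (he : ∀ i ∈ E, e i ≠ 0)
    (σ ω : Polynomial F)
    (hσ : σ = ∏ i ∈ E, (X - C ((α ^ (i : ℕ))⁻¹)))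
    (hω : ω = ∑ i ∈ E, C (e i) * ∏ l ∈ E.erase i, (X - C ((α ^ (l : ℕ))⁻¹))) :
    IsCoprime σ ω ∧
      ∀ j ∈ E, (derivative σ).eval ((α ^ (j : ℕ))⁻¹) ≠ 0 ∧
        e j * (derivative σ).eval ((α ^ (j : ℕ))⁻¹) = ω.eval ((α ^ (j : ℕ))⁻¹) := by
  have hα0 : α ≠ 0 := hα.ne_zero
  set r : Fin n → F := fun i => (α ^ (i : ℕ))⁻¹ with hr
  have hrdef : ∀ i : Fin n, (α ^ (i : ℕ))⁻¹ = r i := fun _ => rfl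
  simp only [hrdef] at hσ hω ⊢
  have key : ∀ a b : ℕ, a < b → b < n → α ^ a ≠ α ^ b := by
    intro a b hab hbn h
    have h2 : α ^ a * α ^ (b - a) = α ^ a * 1 := by
      rw [← pow_add, Nat.add_sub_cancel' hab.le, ← h, mul_one]
    have h1 : α ^ (b - a) = 1 := mul_left_cancel₀ (pow_ne_zero _ hα0) h2
    exact hord (b - a) (by omega) (by omega) h1
  have hinj : ∀ i j : Fin n, r i = r j → i = j := by
    intro i j hij
    have h1 : α ^ (i : ℕ) = α ^ (j : ℕ) := inv_injective hij
    rcases lt_trichotomy (i : ℕ) (j : ℕ) with h | h | h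
    · exact absurd h1 (key _ _ h j.isLt)
    · exact Fin.ext h
    · exact absurd h1.symm (key _ _ h i.isLt)
  have hprod : ∀ j ∈ E, (∏ l ∈ E.erase j, (r j - r l)) ≠ 0 := by
    intro j hj
    rw [Finset.prod_ne_zero_iff]
    intro l hl
    have : l ≠ j := (Finset.mem_erase.mp hl).1
    exact sub_ne_zero_of_ne fun h => this (hinj j l h).symm
  have hσ' : ∀ j ∈ E, (derivative σ).eval (r j) = ∏ l ∈ E.erase j, (r j - r l) := by
    intro j hj
    rw [hσ, ← Lagrange.nodal_eq, Lagrange.eval_nodal_derivative_eval_node_eq hj,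
      Lagrange.eval_nodal]
  have hωe : ∀ j ∈ E, ω.eval (r j) = e j * ∏ l ∈ E.erase j, (r j - r l) := by
    intro j hj
    rw [hω, eval_finset_sum, Finset.sum_eq_single j]
    · simp [eval_prod]
    · intro i hi hne
      rw [eval_mul, eval_prod,
        Finset.prod_eq_zero (Finset.mem_erase.mpr ⟨Ne.symm hne, hj⟩) (by simp), mul_zero]
    · intro h; exact absurd hj h
  constructor
  · rw [hσ]
    apply IsCoprime.prod_left
    intro i hi
    rw [(irreducible_X_sub_C (r i)).coprime_iff_not_dvd, dvd_iff_isRoot]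
    intro hroot
    rw [IsRoot, hωe i hi] at hroot
    exact mul_ne_zero (he i hi) (hprod i hi) hroot
  · intro j hj
    rw [hσ' j hj, hωe j hj]
    exact ⟨hprod j hj, rfl⟩
end

section
/- (Singularity of the syndrome matrix beyond the number of errors) Let F be a field, α ∈ F, E a finite set of natural numbers with |E| = s, and e : ℕ → F. Define the syndromes S_j = Σ_{l∈E} e_l·α^{j·l} for j ≥ 1. Then for every r with r > s, the r × r Hankel matrix M given by M(i,j) = S_{i+j+2} for 0 ≤ i, j ≤ r−1 (i.e., the matrix with rows (S₂, S₃, …, S_{r+1}), (S₃, S₄, …, S_{r+2}), …, (S_{r+1}, …, S_{2r})) has determinant 0. -/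
/-- Singularity of the syndrome matrix beyond the number of errors: with syndromes
`S_j = Σ_{l ∈ E} e_l · α^(j·l)` coming from `s = |E|` error locations, the `r × r`
Hankel matrix `(S_{i+j+2})_{0 ≤ i,j ≤ r-1}` is singular for every `r > s`. -/
theorem stmt_17 {F : Type*} [Field F] (α : F) (E : Finset ℕ) (s : ℕ) (hE : E.card = s)
    (e : ℕ → F) (r : ℕ) (hr : s < r) :
    Matrix.det (Matrix.of fun i j : Fin r =>
      ∑ l ∈ E, e l * α ^ (((i : ℕ) + (j : ℕ) + 2) * l)) = 0 := by
  set A : Matrix (Fin r) E F := Matrix.of fun i l => e (l : ℕ) * α ^ (((i : ℕ) + 1) * (l : ℕ))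
  set B : Matrix E (Fin r) F := Matrix.of fun l j => α ^ (((j : ℕ) + 1) * (l : ℕ))
  have hM : (Matrix.of fun i j : Fin r =>
      ∑ l ∈ E, e l * α ^ (((i : ℕ) + (j : ℕ) + 2) * l)) = A * B := by
    ext i j
    simp only [Matrix.mul_apply, A, B, Matrix.of_apply]
    rw [← Finset.sum_attach E (fun l => e l * α ^ (((i : ℕ) + (j : ℕ) + 2) * l))]
    apply Finset.sum_congr rfl
    intro l _
    rw [mul_assoc, ← pow_add, ← add_mul]
    ring_nf
  rw [hM]
  by_contra hdet
  have hu : IsUnit (A * B) := (Matrix.isUnit_iff_isUnit_det _).2 (isUnit_iff_ne_zero.2 hdet)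
  have hrank : (A * B).rank = Fintype.card (Fin r) := Matrix.rank_of_isUnit _ hu
  have hle : (A * B).rank ≤ Fintype.card E := by
    simpa using Matrix.rank_mul_le_left A B |>.trans (Matrix.rank_le_card_width A)
  rw [hrank] at hle
  simp only [Fintype.card_fin, Fintype.card_coe, hE] at hle
  omega
end

section
/- (Reiger bound) Let F be a finite field, n ≥ 1, and let C be a linear code of length n over F with dim C = k. Call a vector v : Fin n → F a burst of length at most l if there is a starting position a such that the support of v is contained in the l cyclically consecutive positions {a, a+1, …, a+l−1} (indices mod n). Suppose 2l ≤ n and C can correct all bursts of length up to l, i.e., for any two distinct bursts u ≠ v of length at most l, u − v ∉ C. Then 2l ≤ n − k. -/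
/-- `v` is a burst of length at most `l`: the support of `v` is contained in `l`
cyclically consecutive positions starting at some position `a`. -/
def IsBurst {F : Type*} [Zero F] {n : ℕ} (l : ℕ) (v : Fin n → F) : Prop :=
  ∃ a : ℕ, ∀ i : Fin n, v i ≠ 0 → ∃ b : ℕ, b < l ∧ (i : ℕ) = (a + b) % n

/-- Reiger bound: if a linear `[n,k]` code over a finite field corrects all bursts of
length up to `l` (with `2l ≤ n`), i.e. the difference of two distinct bursts of length at
most `l` is never a codeword, then `2l ≤ n - k`. -/
theorem stmt_18 {F : Type*} [Field F] [Fintype F] {n l k : ℕ} (hn : 1 ≤ n)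
    (C : Submodule F (Fin n → F)) (hk : Module.finrank F C = k)
    (hl : 2 * l ≤ n)
    (hburst : ∀ u v : Fin n → F, IsBurst l u → IsBurst l v → u ≠ v → u - v ∉ C) :
    2 * l ≤ n - k := by
  classical
  -- extension-by-zero linear map from Fin (2l) → F into Fin n → F
  let φ : (Fin (2 * l) → F) →ₗ[F] (Fin n → F) :=
    { toFun := fun x i => if h : (i : ℕ) < 2 * l then x ⟨i, h⟩ else 0
      map_add' := by
        intro x y; funext i; by_cases h : (i : ℕ) < 2 * l <;> simp [h]
      map_smul' := by
        intro c x; funext i; by_cases h : (i : ℕ) < 2 * l <;> simp [h] }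
  have hφinj : Function.Injective φ := by
    rw [injective_iff_map_eq_zero]
    intro x hx
    funext j
    have := congrFun hx (Fin.castLE hl j)
    simpa [φ, j.isLt] using this
  set W : Submodule F (Fin n → F) := LinearMap.range φ with hW
  have hWrank : Module.finrank F W = 2 * l := by
    rw [hW, LinearMap.finrank_range_of_inj hφinj]
    simp
  -- the intersection of W and C is trivial
  have hdisj : W ⊓ C = ⊥ := by
    rw [eq_bot_iff]
    rintro w ⟨⟨x, rfl⟩, hwC⟩
    simp only [Submodule.mem_bot]
    by_contra hne
    -- w := φ x is supported on the first 2l coordinates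
    set w : Fin n → F := φ x with hw
    have hsupp : ∀ i : Fin n, ¬ (i : ℕ) < 2 * l → w i = 0 := by
      intro i hi; simp [hw, φ, hi]
    set u : Fin n → F := fun i => if (i : ℕ) < l then w i else 0 with hu
    set v : Fin n → F := fun i => if (i : ℕ) < l then 0 else -w i with hv
    have huv : u - v = w := by
      funext i
      by_cases h : (i : ℕ) < l <;> simp [hu, hv, h]
    have hub : IsBurst l u := by
      refine ⟨0, fun i hi => ?_⟩
      by_cases h : (i : ℕ) < l
      · exact ⟨i, h, by rw [Nat.mod_eq_of_lt (by omega)]; omega⟩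
      · simp [hu, h] at hi
    have hvb : IsBurst l v := by
      refine ⟨l, fun i hi => ?_⟩
      by_cases h : (i : ℕ) < l
      · simp [hv, h] at hi
      · have h2 : (i : ℕ) < 2 * l := by
          by_contra h2
          exact hi (by simp [hv, h, hsupp i h2])
        exact ⟨(i : ℕ) - l, by omega, by rw [Nat.mod_eq_of_lt (by omega)]; omega⟩
    have hune : u ≠ v := by
      intro h
      apply hne
      rw [← huv, h, sub_self]
    exact hburst u v hub hvb hune (by rwa [huv])
  have hsum := Submodule.finrank_sup_add_finrank_inf_eq W C
  rw [hdisj] at hsum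
  simp only [finrank_bot, add_zero] at hsum
  have hle : Module.finrank F ↥(W ⊔ C) ≤ n := by
    have := Submodule.finrank_le (W ⊔ C)
    simpa using this
  omega
end
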